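/- Continuity of the analysis covariance map: if R > 0 and P, Q ≥ 0, then with c = |H|²|R^{-1}| and A(Q) = Q − Q H*(H Q H* + R)^{-1} H Q, one has |A(Q) − A(P)| ≤ |Q−P| (1 + c|Q| + c|P| + c²|P||Q|). -/
import Mathlib


open ContinuousLinearMap RealInnerProductSpace

variable {V W : Type*} [NormedAddCommGroup V] [InnerProductSpace ℝ V] [CompleteSpace V]
  [NormedAddCommGroup W] [InnerProductSpace ℝ W] [CompleteSpace W]

/-- Cauchy–Schwarz for the bilinear form of a positive symmetric operator. -/
private lemma cs_pos (T : W →L[ℝ] W) (hsym : ∀ x y : W, ⟪T x, y⟫ = ⟪x, T y⟫)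
    (hpos : ∀ x : W, 0 ≤ ⟪T x, x⟫) (x y : W) :
    ⟪T x, y⟫ ^ 2 ≤ ⟪T x, x⟫ * ⟪T y, y⟫ := by
  have hyx : ⟪T y, x⟫ = ⟪T x, y⟫ := by rw [hsym y x, real_inner_comm]
  have h : ∀ t : ℝ, 0 ≤ ⟪T y, y⟫ * (t * t) + 2 * ⟪T x, y⟫ * t + ⟪T x, x⟫ := by
    intro t
    have h0 := hpos (x + t • y)
    have expand : ⟪T (x + t • y), x + t • y⟫
        = ⟪T y, y⟫ * (t * t) + 2 * ⟪T x, y⟫ * t + ⟪T x, x⟫ := by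
      simp only [map_add, map_smul, inner_add_left, inner_add_right,
        real_inner_smul_left, real_inner_smul_right]
      rw [hyx]; ring
    linarith [expand ▸ h0]
  have hd := discrim_le_zero h
  rw [discrim] at hd
  nlinarith [hd]

/-- A coercive operator on a real Hilbert space is invertible. -/
private lemma isUnit_of_coercive {S : W →L[ℝ] W} {α : ℝ} (hα : 0 < α)
    (h : ∀ u : W, α * ‖u‖ ^ 2 ≤ ⟪S u, u⟫) : IsUnit S := by
  have hc : IsCoercive ((innerSL ℝ).comp S) := by
    refine ⟨α, hα, fun u => ?_⟩
    have := h u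
    simpa [sq, mul_assoc] using this
  let e := hc.continuousLinearEquivOfBilin
  have he : (e : W →L[ℝ] W) = S := by
    ext u
    refine ext_inner_right ℝ fun v => ?_
    simp [e]
  refine ⟨⟨S, e.symm, ?_, ?_⟩, rfl⟩
  · ext x
    simp [ContinuousLinearMap.mul_def, ← he]
  · ext x
    simp [ContinuousLinearMap.mul_def, ← he]

/-- If `R` is selfadjoint and coercive, and `⟪R u, u⟫ ≤ ⟪S u, u⟫` for all `u`, with `S` a unit,
then `‖S⁻¹‖ ≤ ‖R⁻¹‖`. -/
private lemma norm_inverse_le_norm_inverse {R S : W →L[ℝ] W} (hRsym : IsSelfAdjoint R)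
    {α : ℝ} (hα : 0 < α) (hcoer : ∀ u : W, α * ‖u‖ ^ 2 ≤ ⟪R u, u⟫)
    (hle : ∀ u : W, ⟪R u, u⟫ ≤ ⟪S u, u⟫) (hS : IsUnit S) :
    ‖(Ring.inverse S : W →L[ℝ] W)‖ ≤ ‖(Ring.inverse R : W →L[ℝ] W)‖ := by
  have hRu : IsUnit R := isUnit_of_coercive hα hcoer
  set rI := (Ring.inverse R : W →L[ℝ] W) with hrI
  have h1 : R * rI = 1 := Ring.mul_inverse_cancel R hRu
  have h2 : rI * R = 1 := Ring.inverse_mul_cancel R hRu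
  have hRrI : ∀ x : W, R (rI x) = x := by
    intro x
    have := congrArg (fun f : W →L[ℝ] W => f x) h1
    simpa [ContinuousLinearMap.mul_def] using this
  have hrIR : ∀ x : W, rI (R x) = x := by
    intro x
    have := congrArg (fun f : W →L[ℝ] W => f x) h2
    simpa [ContinuousLinearMap.mul_def] using this
  have hstar : star rI = rI := by
    calc star rI = star rI * (R * rI) := by rw [h1, mul_one]
      _ = (star rI * star R) * rI := by rw [hRsym.star_eq, mul_assoc]
      _ = star (R * rI) * rI := by rw [star_mul]
      _ = rI := by rw [h1, star_one, one_mul]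
  have hrIsym : ∀ x y : W, ⟪rI x, y⟫ = ⟪x, rI y⟫ := by
    have := (isSelfAdjoint_iff_isSymmetric (A := rI)).mp hstar
    exact fun x y => this x y
  have hrIpos : ∀ x : W, 0 ≤ ⟪rI x, x⟫ := by
    intro x
    have h3 := hcoer (rI x)
    have h4 : ⟪R (rI x), rI x⟫ = ⟪rI x, x⟫ := by
      rw [real_inner_comm, hRrI]
    nlinarith [sq_nonneg ‖rI x‖]
  have key : ∀ v : W, ‖v‖ ^ 2 * ‖v‖ ^ 2 ≤ ⟪R v, v⟫ * (‖rI‖ * (‖v‖ * ‖v‖)) := by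
    intro v
    have hc := cs_pos rI hrIsym hrIpos (R v) v
    rw [hrIR v] at hc
    have h5 : ⟪v, R v⟫ = ⟪R v, v⟫ := real_inner_comm _ _
    have h6 : ⟪v, v⟫ = ‖v‖ ^ 2 := real_inner_self_eq_norm_sq v
    have h7 : ⟪rI v, v⟫ ≤ ‖rI‖ * (‖v‖ * ‖v‖) := by
      calc ⟪rI v, v⟫ ≤ ‖rI v‖ * ‖v‖ := real_inner_le_norm _ _
        _ ≤ ‖rI‖ * ‖v‖ * ‖v‖ := by
            have := rI.le_opNorm v
            nlinarith [norm_nonneg v]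
        _ = ‖rI‖ * (‖v‖ * ‖v‖) := by ring
    have h8 : 0 ≤ ⟪R v, v⟫ := le_trans (by positivity) (hcoer v)
    rw [h5, h6] at hc
    nlinarith [hc, mul_le_mul_of_nonneg_left h7 h8]
  refine ContinuousLinearMap.opNorm_le_bound _ (norm_nonneg rI) fun u => ?_
  set v := (Ring.inverse S : W →L[ℝ] W) u with hv
  have hSv : S v = u := by
    have := congrArg (fun f : W →L[ℝ] W => f u) (Ring.mul_inverse_cancel S hS)
    simpa [ContinuousLinearMap.mul_def] using this
  have hq : ⟪R v, v⟫ ≤ ‖u‖ * ‖v‖ := by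
    calc ⟪R v, v⟫ ≤ ⟪S v, v⟫ := hle v
      _ = ⟪u, v⟫ := by rw [hSv]
      _ ≤ ‖u‖ * ‖v‖ := real_inner_le_norm _ _
  rcases eq_or_lt_of_le (norm_nonneg v) with h0 | h0
  · rw [← h0]
    positivity
  · have hk := key v
    have h8 : 0 ≤ ⟪R v, v⟫ := le_trans (by positivity) (hcoer v)
    have hk' : ‖v‖ ^ 2 * ‖v‖ ^ 2 ≤ (⟪R v, v⟫ * ‖rI‖) * ‖v‖ ^ 2 := by
      rw [show (⟪R v, v⟫ * ‖rI‖) * ‖v‖ ^ 2 = ⟪R v, v⟫ * (‖rI‖ * (‖v‖ * ‖v‖)) from by ring]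
      exact hk
    have hsq : ‖v‖ ^ 2 ≤ ⟪R v, v⟫ * ‖rI‖ :=
      le_of_mul_le_mul_right hk' (by positivity)
    have h9 : ⟪R v, v⟫ * ‖rI‖ ≤ (‖u‖ * ‖v‖) * ‖rI‖ :=
      mul_le_mul_of_nonneg_right hq (norm_nonneg _)
    have : ‖v‖ * ‖v‖ ≤ (‖rI‖ * ‖u‖) * ‖v‖ := by nlinarith [hsq, h9]
    exact le_of_mul_le_mul_right this h0

/-- The analysis covariance map `A(Q) = Q − Q H* (H Q H* + R)⁻¹ H Q`. -/
noncomputable def analysisCov (H : V →L[ℝ] W) (R : W →L[ℝ] W) (Q : V →L[ℝ] V) : V →L[ℝ] V :=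
  Q - (Q ∘L ContinuousLinearMap.adjoint H) ∘L
    Ring.inverse (H ∘L Q ∘L ContinuousLinearMap.adjoint H + R) ∘L (H ∘L Q)

/-- Continuity of the analysis covariance map: if `R > 0` and `P, Q ≥ 0`, then with
`c = |H|²|R⁻¹|`, `|A(Q) − A(P)| ≤ |Q−P| (1 + c|Q| + c|P| + c²|P||Q|)`. -/
theorem analysisCov_continuity
    (H : V →L[ℝ] W) (R : W →L[ℝ] W) (P Q : V →L[ℝ] V)
    (hP : P.IsPositive) (hQ : Q.IsPositive) (hRsym : IsSelfAdjoint R)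
    (hRpos : ∃ α : ℝ, 0 < α ∧ ∀ u : W, α * ‖u‖ ^ 2 ≤ ⟪R u, u⟫) :
    ‖analysisCov H R Q - analysisCov H R P‖
      ≤ ‖Q - P‖ * (1 + (‖H‖ ^ 2 * ‖(Ring.inverse R : W →L[ℝ] W)‖) * ‖Q‖
          + (‖H‖ ^ 2 * ‖(Ring.inverse R : W →L[ℝ] W)‖) * ‖P‖
          + (‖H‖ ^ 2 * ‖(Ring.inverse R : W →L[ℝ] W)‖) ^ 2 * ‖P‖ * ‖Q‖) := by
  obtain ⟨α, hα, hcoer⟩ := hRpos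
  set X := ContinuousLinearMap.adjoint H with hXdef
  set S := H ∘L Q ∘L X + R with hSdef
  set T := H ∘L P ∘L X + R with hTdef
  -- key positivity facts
  have hQc : (H ∘L Q ∘L X).IsPositive := hQ.conj_adjoint H
  have hPc : (H ∘L P ∘L X).IsPositive := hP.conj_adjoint H
  have hScoer : ∀ u : W, α * ‖u‖ ^ 2 ≤ ⟪S u, u⟫ := by
    intro u
    have h1 : (0 : ℝ) ≤ ⟪(H ∘L Q ∘L X) u, u⟫ := by
      simpa using hQc.inner_nonneg_left u
    have h2 := hcoer u
    simp only [hSdef, ContinuousLinearMap.add_apply, inner_add_left]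
    linarith
  have hTcoer : ∀ u : W, α * ‖u‖ ^ 2 ≤ ⟪T u, u⟫ := by
    intro u
    have h1 : (0 : ℝ) ≤ ⟪(H ∘L P ∘L X) u, u⟫ := by
      simpa using hPc.inner_nonneg_left u
    have h2 := hcoer u
    simp only [hTdef, ContinuousLinearMap.add_apply, inner_add_left]
    linarith
  have hSle : ∀ u : W, ⟪R u, u⟫ ≤ ⟪S u, u⟫ := by
    intro u
    have h1 : (0 : ℝ) ≤ ⟪(H ∘L Q ∘L X) u, u⟫ := by
      simpa using hQc.inner_nonneg_left u
    simp only [hSdef, ContinuousLinearMap.add_apply, inner_add_left]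
    linarith
  have hTle : ∀ u : W, ⟪R u, u⟫ ≤ ⟪T u, u⟫ := by
    intro u
    have h1 : (0 : ℝ) ≤ ⟪(H ∘L P ∘L X) u, u⟫ := by
      simpa using hPc.inner_nonneg_left u
    simp only [hTdef, ContinuousLinearMap.add_apply, inner_add_left]
    linarith
  have hSu : IsUnit S := isUnit_of_coercive hα hScoer
  have hTu : IsUnit T := isUnit_of_coercive hα hTcoer
  set a := (Ring.inverse S : W →L[ℝ] W) with hadef
  set b := (Ring.inverse T : W →L[ℝ] W) with hbdef
  have haS : a * S = 1 := Ring.inverse_mul_cancel S hSu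
  have hTb : T * b = 1 := Ring.mul_inverse_cancel T hTu
  set r := ‖(Ring.inverse R : W →L[ℝ] W)‖ with hrdef
  have hra : ‖a‖ ≤ r := norm_inverse_le_norm_inverse hRsym hα hcoer hSle hSu
  have hrb : ‖b‖ ≤ r := norm_inverse_le_norm_inverse hRsym hα hcoer hTle hTu
  have hr0 : 0 ≤ r := norm_nonneg _
  have hXnorm : ‖X‖ = ‖H‖ := LinearIsometryEquiv.norm_map ContinuousLinearMap.adjoint H
  -- algebraic identity
  have hTS : T - S = -(H ∘L ((Q - P) ∘L X)) := by
    rw [hSdef, hTdef]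
    simp only [ContinuousLinearMap.sub_comp, ContinuousLinearMap.comp_sub]
    abel
  have hab : a - b = -(a * (H ∘L ((Q - P) ∘L X)) * b) := by
    calc a - b = a * (T * b) - (a * S) * b := by rw [hTb, haS, mul_one, one_mul]
      _ = a * (T - S) * b := by noncomm_ring
      _ = -(a * (H ∘L ((Q - P) ∘L X)) * b) := by rw [hTS]; noncomm_ring
  have main1 : analysisCov H R Q - analysisCov H R P
      = (Q - P) - ((Q - P) ∘L X) ∘L (a ∘L (H ∘L Q))
        - (P ∘L X) ∘L ((a - b) ∘L (H ∘L Q))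
        - (P ∘L X) ∘L (b ∘L (H ∘L (Q - P))) := by
    unfold analysisCov
    rw [← hXdef, ← hSdef, ← hTdef, ← hadef, ← hbdef]
    simp only [ContinuousLinearMap.sub_comp, ContinuousLinearMap.comp_sub]
    abel
  have main : analysisCov H R Q - analysisCov H R P
      = (Q - P) - ((Q - P) ∘L X) ∘L (a ∘L (H ∘L Q))
        + (P ∘L X) ∘L ((a * (H ∘L ((Q - P) ∘L X)) * b) ∘L (H ∘L Q))
        - (P ∘L X) ∘L (b ∘L (H ∘L (Q - P))) := by
    rw [main1, hab]
    simp only [ContinuousLinearMap.neg_comp, ContinuousLinearMap.comp_neg, sub_neg_eq_add]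
  -- norm bounds for each piece
  have h2 : ‖((Q - P) ∘L X) ∘L (a ∘L (H ∘L Q))‖ ≤ (‖Q - P‖ * ‖H‖) * (r * (‖H‖ * ‖Q‖)) := by
    calc ‖((Q - P) ∘L X) ∘L (a ∘L (H ∘L Q))‖
        ≤ ‖(Q - P) ∘L X‖ * ‖a ∘L (H ∘L Q)‖ := opNorm_comp_le _ _
      _ ≤ (‖Q - P‖ * ‖X‖) * (‖a‖ * ‖H ∘L Q‖) := by
          apply mul_le_mul (opNorm_comp_le _ _) (opNorm_comp_le _ _) (norm_nonneg _)
          positivity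
      _ ≤ (‖Q - P‖ * ‖H‖) * (r * (‖H‖ * ‖Q‖)) := by
          rw [hXnorm]
          apply mul_le_mul_of_nonneg_left _ (by positivity)
          exact mul_le_mul hra (opNorm_comp_le _ _) (norm_nonneg _) hr0
  have h4 : ‖(P ∘L X) ∘L (b ∘L (H ∘L (Q - P)))‖ ≤ (‖P‖ * ‖H‖) * (r * (‖H‖ * ‖Q - P‖)) := by
    calc ‖(P ∘L X) ∘L (b ∘L (H ∘L (Q - P)))‖
        ≤ ‖P ∘L X‖ * ‖b ∘L (H ∘L (Q - P))‖ := opNorm_comp_le _ _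
      _ ≤ (‖P‖ * ‖X‖) * (‖b‖ * ‖H ∘L (Q - P)‖) := by
          apply mul_le_mul (opNorm_comp_le _ _) (opNorm_comp_le _ _) (norm_nonneg _)
          positivity
      _ ≤ (‖P‖ * ‖H‖) * (r * (‖H‖ * ‖Q - P‖)) := by
          rw [hXnorm]
          apply mul_le_mul_of_nonneg_left _ (by positivity)
          exact mul_le_mul hrb (opNorm_comp_le _ _) (norm_nonneg _) hr0
  have hmid : ‖a * (H ∘L ((Q - P) ∘L X)) * b‖ ≤ r * (‖H‖ * (‖Q - P‖ * ‖H‖)) * r := by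
    calc ‖a * (H ∘L ((Q - P) ∘L X)) * b‖
        ≤ ‖a * (H ∘L ((Q - P) ∘L X))‖ * ‖b‖ := norm_mul_le _ _
      _ ≤ (‖a‖ * ‖H ∘L ((Q - P) ∘L X)‖) * ‖b‖ := by
          apply mul_le_mul_of_nonneg_right (norm_mul_le _ _) (norm_nonneg _)
      _ ≤ (r * (‖H‖ * (‖Q - P‖ * ‖H‖))) * r := by
          apply mul_le_mul _ hrb (norm_nonneg _) (by positivity)
          apply mul_le_mul hra _ (norm_nonneg _) hr0
          calc ‖H ∘L ((Q - P) ∘L X)‖ ≤ ‖H‖ * ‖(Q - P) ∘L X‖ := opNorm_comp_le _ _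
            _ ≤ ‖H‖ * (‖Q - P‖ * ‖X‖) := by
                apply mul_le_mul_of_nonneg_left (opNorm_comp_le _ _) (norm_nonneg _)
            _ = ‖H‖ * (‖Q - P‖ * ‖H‖) := by rw [hXnorm]
  have h3 : ‖(P ∘L X) ∘L ((a * (H ∘L ((Q - P) ∘L X)) * b) ∘L (H ∘L Q))‖
      ≤ (‖P‖ * ‖H‖) * ((r * (‖H‖ * (‖Q - P‖ * ‖H‖)) * r) * (‖H‖ * ‖Q‖)) := by
    calc ‖(P ∘L X) ∘L ((a * (H ∘L ((Q - P) ∘L X)) * b) ∘L (H ∘L Q))‖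
        ≤ ‖P ∘L X‖ * ‖(a * (H ∘L ((Q - P) ∘L X)) * b) ∘L (H ∘L Q)‖ := opNorm_comp_le _ _
      _ ≤ (‖P‖ * ‖X‖) * (‖a * (H ∘L ((Q - P) ∘L X)) * b‖ * ‖H ∘L Q‖) := by
          apply mul_le_mul (opNorm_comp_le _ _) (opNorm_comp_le _ _) (norm_nonneg _)
          positivity
      _ ≤ (‖P‖ * ‖H‖) * ((r * (‖H‖ * (‖Q - P‖ * ‖H‖)) * r) * (‖H‖ * ‖Q‖)) := by
          rw [hXnorm]
          apply mul_le_mul_of_nonneg_left _ (by positivity)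
          exact mul_le_mul hmid (opNorm_comp_le _ _) (norm_nonneg _) (by positivity)
  -- put it together
  have tri : ‖analysisCov H R Q - analysisCov H R P‖
      ≤ ‖Q - P‖ + ‖((Q - P) ∘L X) ∘L (a ∘L (H ∘L Q))‖
        + ‖(P ∘L X) ∘L ((a * (H ∘L ((Q - P) ∘L X)) * b) ∘L (H ∘L Q))‖
        + ‖(P ∘L X) ∘L (b ∘L (H ∘L (Q - P)))‖ := by
    rw [main]
    calc ‖(Q - P) - ((Q - P) ∘L X) ∘L (a ∘L (H ∘L Q))
          + (P ∘L X) ∘L ((a * (H ∘L ((Q - P) ∘L X)) * b) ∘L (H ∘L Q))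
          - (P ∘L X) ∘L (b ∘L (H ∘L (Q - P)))‖
        ≤ ‖(Q - P) - ((Q - P) ∘L X) ∘L (a ∘L (H ∘L Q))
          + (P ∘L X) ∘L ((a * (H ∘L ((Q - P) ∘L X)) * b) ∘L (H ∘L Q))‖
          + ‖(P ∘L X) ∘L (b ∘L (H ∘L (Q - P)))‖ := norm_sub_le _ _
      _ ≤ ‖(Q - P) - ((Q - P) ∘L X) ∘L (a ∘L (H ∘L Q))‖
          + ‖(P ∘L X) ∘L ((a * (H ∘L ((Q - P) ∘L X)) * b) ∘L (H ∘L Q))‖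
          + ‖(P ∘L X) ∘L (b ∘L (H ∘L (Q - P)))‖ := by
          gcongr
          exact norm_add_le _ _
      _ ≤ ‖Q - P‖ + ‖((Q - P) ∘L X) ∘L (a ∘L (H ∘L Q))‖
          + ‖(P ∘L X) ∘L ((a * (H ∘L ((Q - P) ∘L X)) * b) ∘L (H ∘L Q))‖
          + ‖(P ∘L X) ∘L (b ∘L (H ∘L (Q - P)))‖ := by
          gcongr
          exact norm_sub_le _ _
  calc ‖analysisCov H R Q - analysisCov H R P‖
      ≤ ‖Q - P‖ + (‖Q - P‖ * ‖H‖) * (r * (‖H‖ * ‖Q‖))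
        + (‖P‖ * ‖H‖) * ((r * (‖H‖ * (‖Q - P‖ * ‖H‖)) * r) * (‖H‖ * ‖Q‖))
        + (‖P‖ * ‖H‖) * (r * (‖H‖ * ‖Q - P‖)) := by
        linarith [tri, h2, h3, h4]
    _ = ‖Q - P‖ * (1 + (‖H‖ ^ 2 * r) * ‖Q‖ + (‖H‖ ^ 2 * r) * ‖P‖
          + (‖H‖ ^ 2 * r) ^ 2 * ‖P‖ * ‖Q‖) := by ring
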